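/- Let F be a set functor admitting a terminal coalgebra (Z,γ), and let Λ be a relational connector of F. Then: (1) Λ-similarity is sound if and only if Λ1_Z = 1_{FZ}; (2) if moreover F preserves monomorphisms, then Λ-similarity is sound if and only if Λ1_A = 1_{FA} for every set A of cardinality at most |Z|. -/

import Mathlib

open CategoryTheory Function

universe u

/-- Applicative composition of relations: `relComp s r = s · r`. -/
def relComp {X Y Z : Type u} (s : Y → Z → Prop) (r : X → Y → Prop) : X → Z → Prop :=
  fun x z => ∃ y, r x y ∧ s y z

/-- Converse of a relation. -/
def relConv {X Y : Type u} (r : X → Y → Prop) : Y → X → Prop := fun y x => r x y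

/-- Graph relation of a function. -/
def fgraph {X Y : Type u} (f : X → Y) : X → Y → Prop := fun x y => f x = y

/-- An `F`-relator: a monotone assignment of relations `F X ⇸ F Y` to relations `X ⇸ Y`. -/
structure Relator (F : Type u ⥤ Type u) : Type (u + 1) where
  map : ∀ {X Y : Type u}, (X → Y → Prop) → (F.obj X → F.obj Y → Prop)
  mono : ∀ {X Y : Type u} {r s : X → Y → Prop}, (∀ x y, r x y → s x y) →
    ∀ u v, map r u v → map s u v

/-- `f` is a coalgebra homomorphism from `(X, α)` to `(Y, β)`. -/
def IsCoalgHom (F : Type u ⥤ Type u) {X Y : Type u} (α : X → F.obj X) (β : Y → F.obj Y)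
    (f : X → Y) : Prop :=
  ∀ x, β (f x) = F.map (TypeCat.ofHom f) (α x)

/-- Behavioural equivalence of states. -/
def BehEq (F : Type u ⥤ Type u) {X Y : Type u} (α : X → F.obj X) (β : Y → F.obj Y)
    (x : X) (y : Y) : Prop :=
  ∃ (Z : Type u) (γ : Z → F.obj Z) (f : X → Z) (g : Y → Z),
    IsCoalgHom F α γ f ∧ IsCoalgHom F β γ g ∧ f x = g y

/-- `r` is a `Λ`-simulation from `(X, α)` to `(Y, β)`: `r ≤ β° · Λr · α`. -/
def IsSimulation {F : Type u ⥤ Type u} (Λ : Relator F) {X Y : Type u}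
    (α : X → F.obj X) (β : Y → F.obj Y) (r : X → Y → Prop) : Prop :=
  ∀ x y, r x y → Λ.map r (α x) (β y)

/-- `x` and `y` are `Λ`-similar: related by some `Λ`-simulation. -/
def LSimilar {F : Type u ⥤ Type u} (Λ : Relator F) {X Y : Type u}
    (α : X → F.obj X) (β : Y → F.obj Y) (x : X) (y : Y) : Prop :=
  ∃ r, IsSimulation Λ α β r ∧ r x y

/-- `Λ` is a relational connector: `1_{FX} ≤ Λ1_X` and `Λ(g° · r · f) = (Fg)° · Λr · Ff`. -/
def IsRelConnector (F : Type u ⥤ Type u) (Λ : Relator F) : Prop :=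
  (∀ (X : Type u) (u : F.obj X), Λ.map (@Eq X) u u) ∧
  (∀ {X Y A B : Type u} (r : X → Y → Prop) (f : A → X) (g : B → Y)
    (u : F.obj A) (v : F.obj B),
    Λ.map (fun a b => r (f a) (g b)) u v ↔ Λ.map r (F.map (TypeCat.ofHom f) u) (F.map (TypeCat.ofHom g) v))

/-- `(Z, γ)` is a terminal `F`-coalgebra. -/
def IsTerminalCoalg (F : Type u ⥤ Type u) {Z : Type u} (γ : Z → F.obj Z) : Prop :=
  ∀ (X : Type u) (α : X → F.obj X), ∃! f : X → Z, IsCoalgHom F α γ f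

/-- `Λ`-similarity is sound: `Λ`-similar states are behaviourally equivalent. -/
def Sound (F : Type u ⥤ Type u) (Λ : Relator F) : Prop :=
  ∀ {X Y : Type u} (α : X → F.obj X) (β : Y → F.obj Y) (x : X) (y : Y),
    LSimilar Λ α β x y → BehEq F α β x y

section Aux

variable {F : Type u ⥤ Type u}

lemma Fmap_comp {X Y W : Type u} (f : X → Y) (g : Y → W) (u : F.obj X) :
    F.map (TypeCat.ofHom (g ∘ f)) u = F.map (TypeCat.ofHom g) (F.map (TypeCat.ofHom f) u) :=
  F.map_comp_apply (TypeCat.ofHom f) (TypeCat.ofHom g) u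

lemma Fmap_id {X : Type u} (u : F.obj X) : F.map (TypeCat.ofHom (id : X → X)) u = u :=
  F.map_id_apply X u

lemma isCoalgHom_id {X : Type u} (α : X → F.obj X) : IsCoalgHom F α α id := by
  intro x; rw [Fmap_id]; rfl

lemma isCoalgHom_comp {X Y W : Type u} {α : X → F.obj X} {β : Y → F.obj Y}
    {δ : W → F.obj W} {f : X → Y} {g : Y → W} (hf : IsCoalgHom F α β f)
    (hg : IsCoalgHom F β δ g) : IsCoalgHom F α δ (g ∘ f) := by
  intro x
  show δ (g (f x)) = F.map (TypeCat.ofHom (g ∘ f)) (α x)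
  rw [hg, hf, ← Fmap_comp]

/-- Behaviourally equivalent states are identified by the canonical maps into a
terminal coalgebra. -/
lemma behEq_final {Z : Type u} {γ : Z → F.obj Z} (hterm : IsTerminalCoalg F γ)
    {X Y : Type u} {α : X → F.obj X} {β : Y → F.obj Y} {fX : X → Z} {fY : Y → Z}
    (hfX : IsCoalgHom F α γ fX) (hfY : IsCoalgHom F β γ fY) {x : X} {y : Y}
    (h : BehEq F α β x y) : fX x = fY y := by
  obtain ⟨W, δ, p, q, hp, hq, hpq⟩ := h
  obtain ⟨k, hk, -⟩ := hterm W δ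
  have h1 : (k ∘ p) = fX := (hterm X α).unique (isCoalgHom_comp hp hk) hfX
  have h2 : (k ∘ q) = fY := (hterm Y β).unique (isCoalgHom_comp hq hk) hfY
  calc fX x = k (p x) := by rw [← h1]; rfl
    _ = k (q y) := by rw [hpq]
    _ = fY y := by rw [← h2]; rfl

/-- Lambek-style lemma: the canonical hom `h : (FZ, Fγ) → (Z, γ)` is a section
of `γ`. -/
lemma lambek {Z : Type u} {γ : Z → F.obj Z} (hterm : IsTerminalCoalg F γ) :
    ∃ h : F.obj Z → Z, IsCoalgHom F (fun u => F.map (TypeCat.ofHom γ) u) γ h ∧ ∀ u, γ (h u) = u := by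
  obtain ⟨h, hh, -⟩ := hterm (F.obj Z) (fun u => F.map (TypeCat.ofHom γ) u)
  have hγ : IsCoalgHom F γ (fun u => F.map (TypeCat.ofHom γ) u) γ := fun _ => rfl
  have hid : h ∘ γ = id := (hterm Z γ).unique (isCoalgHom_comp hγ hh) (isCoalgHom_id γ)
  refine ⟨h, hh, fun u => ?_⟩
  rw [hh u, ← Fmap_comp, hid, Fmap_id]

/-- A relational connector satisfies `Λ1_Z = 1_{FZ}` whenever `Λ`-similarity is sound,
for `Z` carrying a terminal coalgebra. -/
lemma sound_imp_eq {Z : Type u} {γ : Z → F.obj Z} (hterm : IsTerminalCoalg F γ)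
    (Λ : Relator F) (hconn : IsRelConnector F Λ) (hs : Sound F Λ) :
    ∀ u v : F.obj Z, Λ.map (@Eq Z) u v ↔ u = v := by
  intro u v
  constructor
  · intro huv
    have hsim : IsSimulation Λ (fun w => F.map (TypeCat.ofHom γ) w) (fun w => F.map (TypeCat.ofHom γ) w)
        (Λ.map (@Eq Z)) := by
      intro a b hab
      have h1 : Λ.map (fun z w => Λ.map (@Eq Z) (γ z) (γ w)) a b := by
        refine Λ.mono (fun z w h => ?_) a b hab
        subst h; exact hconn.1 Z (γ z)
      exact (hconn.2 (Λ.map (@Eq Z)) γ γ a b).mp h1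
    have hbeh := hs (fun w => F.map (TypeCat.ofHom γ) w) (fun w => F.map (TypeCat.ofHom γ) w) u v ⟨_, hsim, huv⟩
    obtain ⟨h, hh, hγh⟩ := lambek hterm
    have heq : h u = h v := behEq_final hterm hh hh hbeh
    rw [← hγh u, ← hγh v, heq]
  · rintro rfl; exact hconn.1 Z u

/-- If `Λ1_Z = 1_{FZ}`, every `Λ`-simulation on the terminal coalgebra is contained
in equality. -/
lemma sim_le_eq {Z : Type u} {γ : Z → F.obj Z} (hterm : IsTerminalCoalg F γ)
    (Λ : Relator F) (hconn : IsRelConnector F Λ)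
    (hZ : ∀ u v : F.obj Z, Λ.map (@Eq Z) u v ↔ u = v)
    (t : Z → Z → Prop) (ht : IsSimulation Λ γ γ t) : ∀ z w, t z w → z = w := by
  classical
  letI s : Setoid Z := Relation.EqvGen.setoid t
  set e : Z → Z := fun z => (Quotient.mk s z).out with he_def
  have hker : ∀ z w, Relation.EqvGen t z w → e z = e w := fun z w h =>
    congrArg Quotient.out (Quotient.sound h)
  have hez : ∀ z, Relation.EqvGen t (e z) z := by
    intro z
    exact Quotient.exact (Quotient.out_eq (Quotient.mk s z))
  have hK : ∀ z w, Relation.EqvGen t z w → F.map (TypeCat.ofHom e) (γ z) = F.map (TypeCat.ofHom e) (γ w) := by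
    intro z w h
    induction h with
    | rel a b hab =>
      have h1 : Λ.map t (γ a) (γ b) := ht a b hab
      have h2 : Λ.map (fun z w => e z = e w) (γ a) (γ b) :=
        Λ.mono (fun z w hzw => hker z w (Relation.EqvGen.rel z w hzw)) _ _ h1
      have h3 := (hconn.2 (@Eq Z) e e (γ a) (γ b)).mp h2
      exact (hZ _ _).mp h3
    | refl a => rfl
    | symm a b _ ih => exact ih.symm
    | trans a b c _ _ ih1 ih2 => exact ih1.trans ih2
  have he : IsCoalgHom F γ (fun z => F.map (TypeCat.ofHom e) (γ z)) e := by
    intro z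
    show F.map (TypeCat.ofHom e) (γ (e z)) = F.map (TypeCat.ofHom e) (γ z)
    exact hK _ _ (hez z)
  obtain ⟨m, hm, -⟩ := hterm Z (fun z => F.map (TypeCat.ofHom e) (γ z))
  have hme : m ∘ e = id := (hterm Z γ).unique (isCoalgHom_comp he hm) (isCoalgHom_id γ)
  intro z w hzw
  have h1 : e z = e w := hker z w (Relation.EqvGen.rel z w hzw)
  calc z = (m ∘ e) z := (congrFun hme z).symm
    _ = (m ∘ e) w := congrArg m h1
    _ = w := congrFun hme w

/-- Converse: `Λ1_Z = 1_{FZ}` implies soundness. -/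
lemma eq_imp_sound {Z : Type u} {γ : Z → F.obj Z} (hterm : IsTerminalCoalg F γ)
    (Λ : Relator F) (hconn : IsRelConnector F Λ)
    (hZ : ∀ u v : F.obj Z, Λ.map (@Eq Z) u v ↔ u = v) : Sound F Λ := by
  intro X Y α β x y hsim
  obtain ⟨r, hr, hrxy⟩ := hsim
  obtain ⟨f, hf, -⟩ := hterm X α
  obtain ⟨g, hg, -⟩ := hterm Y β
  set t : Z → Z → Prop := fun z w => ∃ a b, r a b ∧ f a = z ∧ g b = w with ht_def
  have ht : IsSimulation Λ γ γ t := by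
    rintro z w ⟨a, b, hab, rfl, rfl⟩
    have h1 : Λ.map r (α a) (β b) := hr a b hab
    have h2 : Λ.map (fun a b => t (f a) (g b)) (α a) (β b) :=
      Λ.mono (fun a b h => ⟨a, b, h, rfl, rfl⟩) _ _ h1
    have h3 := (hconn.2 t f g (α a) (β b)).mp h2
    rwa [← hf a, ← hg b] at h3
  have hteq := sim_le_eq hterm Λ hconn hZ t ht
  exact ⟨Z, γ, f, g, hf, hg, hteq _ _ ⟨x, y, hrxy, rfl, rfl⟩⟩

end Aux

/-- Let `F` admit a terminal coalgebra `(Z, γ)` and let `Λ` be a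
relational connector of `F`. Then: (1) `Λ`-similarity is sound iff `Λ1_Z = 1_{FZ}`;
(2) if `F` preserves monomorphisms, then `Λ`-similarity is sound iff
`Λ1_A = 1_{FA}` for every set `A` of cardinality at most `|Z|`. -/
theorem stmt18 (F : Type u ⥤ Type u) {Z : Type u} (γ : Z → F.obj Z)
    (hterm : IsTerminalCoalg F γ) (Λ : Relator F) (hconn : IsRelConnector F Λ) :
    (Sound F Λ ↔ ∀ u v : F.obj Z, Λ.map (@Eq Z) u v ↔ u = v)
    ∧
    ((∀ {X Y : Type u} (f : X → Y), Function.Injective f → Function.Injective (F.map (TypeCat.ofHom f))) →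
      (Sound F Λ ↔
        ∀ A : Type u, (∃ e : A → Z, Function.Injective e) →
          ∀ u v : F.obj A, Λ.map (@Eq A) u v ↔ u = v)) := by
  have part1 : Sound F Λ ↔ ∀ u v : F.obj Z, Λ.map (@Eq Z) u v ↔ u = v :=
    ⟨sound_imp_eq hterm Λ hconn, eq_imp_sound hterm Λ hconn⟩
  refine ⟨part1, fun hmono => ⟨?_, ?_⟩⟩
  · rintro hs A ⟨i, hi⟩ u v
    constructor
    · intro h
      have h2 : Λ.map (fun a b => i a = i b) u v :=
        Λ.mono (fun a b hab => congrArg i hab) _ _ h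
      have h3 := (hconn.2 (@Eq Z) i i u v).mp h2
      have h4 := ((part1.mp hs) _ _).mp h3
      exact hmono i hi h4
    · rintro rfl; exact hconn.1 A u
  · intro hA
    exact part1.mpr (hA Z ⟨id, fun _ _ h => h⟩)
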